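/- arXiv:1403.6996 — 4 statements merged into one kernel-verified Lean document; each statement's English description precedes it below -/
import Mathlib

section
/- Let f : ℝ → ℝ be twice continuously differentiable near a simple root α with f'(α) ≠ 0 and f'(α) ≠ -1. Then Steffensen's method x_{n+1} = x_n - f(x_n)²/(f(x_n + f(x_n)) - f(x_n)) converges quadratically to α for initial points sufficiently close to α. -/
open Filter Metric Topology

theorem steffensen_mvt (f : ℝ → ℝ) (α a L r : ℝ) (hL : 0 ≤ L)
    (hdiff : ∀ t ∈ Metric.closedBall α r, DifferentiableAt ℝ f t)
    (hlip : ∀ t ∈ Metric.closedBall α r, |deriv f t - a| ≤ L * |t - α|)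
    {x y : ℝ} (hx : x ∈ Metric.closedBall α r) (hy : y ∈ Metric.closedBall α r) :
    |f y - f x - a * (y - x)| ≤ L * max |x - α| |y - α| * |y - x| := by
  set m := max |x - α| |y - α| with hm
  have hxr : |x - α| ≤ r := by simpa [Real.dist_eq] using hx
  have hyr : |y - α| ≤ r := by simpa [Real.dist_eq] using hy
  have hmr : m ≤ r := max_le hxr hyr
  have hsub : Metric.closedBall α m ⊆ Metric.closedBall α r :=
    Metric.closedBall_subset_closedBall hmr
  have hconv : Convex ℝ (Metric.closedBall α m) := convex_closedBall _ _
  have hderiv : ∀ t ∈ Metric.closedBall α m,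
      deriv (fun t => f t - a * t) t = deriv f t - a := by
    intro t ht
    have h1 : HasDerivAt (fun t : ℝ => a * t) a t := by
      simpa using (hasDerivAt_id t).const_mul a
    have h2 : HasDerivAt (fun t => f t - a * t) (deriv f t - a) t :=
      ((hdiff t (hsub ht)).hasDerivAt).sub h1
    exact h2.deriv
  have key := hconv.norm_image_sub_le_of_norm_deriv_le (f := fun t => f t - a * t)
    (C := L * m)
    (fun t ht => ((hdiff t (hsub ht)).sub ((differentiableAt_id.const_mul a))))
    (fun t ht => by
      rw [hderiv t ht, Real.norm_eq_abs]
      have h1 : |deriv f t - a| ≤ L * |t - α| := hlip t (hsub ht)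
      have h2 : |t - α| ≤ m := by simpa [Real.dist_eq] using ht
      exact h1.trans (mul_le_mul_of_nonneg_left h2 hL))
    (show x ∈ Metric.closedBall α m by simp [Real.dist_eq, hm, le_max_left])
    (show y ∈ Metric.closedBall α m by simp [Real.dist_eq, hm, le_max_right])
  have heq : (f y - a * y) - (f x - a * x) = f y - f x - a * (y - x) := by ring
  simpa [Real.norm_eq_abs, heq] using key

theorem steffensen_key (f : ℝ → ℝ) (α a L r : ℝ) (hr : 0 < r) (hL : 0 ≤ L) (ha : a ≠ 0)
    (hroot : f α = 0)
    (hdiff : ∀ t ∈ Metric.closedBall α r, DifferentiableAt ℝ f t)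
    (hlip : ∀ t ∈ Metric.closedBall α r, |deriv f t - a| ≤ L * |t - α|) :
    ∃ δ > (0:ℝ), ∃ C > (0:ℝ), C * δ ≤ 1/2 ∧ ∀ x : ℝ, |x - α| ≤ δ →
      |x - f x ^ 2 / (f (x + f x) - f x) - α| ≤ C * (x - α) ^ 2 := by
  set A := |a| with hA
  have hA0 : 0 < A := abs_pos.2 ha
  set M := A + L * r with hM
  have hM0 : 0 < M := by positivity
  set K1 := L * M * (2 + M) with hK1
  have hK10 : 0 ≤ K1 := by positivity
  set K2 := L * (A + (1 + M) * M) with hK2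
  have hK20 : 0 ≤ K2 := by positivity
  set C := 2 * K1 / A ^ 2 + 1 with hC
  have hC0 : 0 < C := by positivity
  set δ := min (min r (r / (1 + M))) (min ((A ^ 2 / 2) / (K2 + 1)) (1 / (2 * C))) with hδ
  have hδ0 : 0 < δ := by
    apply lt_min (lt_min hr (by positivity)) (lt_min (by positivity) (by positivity))
  have hδr : δ ≤ r := le_trans (min_le_left _ _) (min_le_left _ _)
  have hδ2 : (1 + M) * δ ≤ r := by
    have h : δ ≤ r / (1 + M) := le_trans (min_le_left _ _) (min_le_right _ _)
    calc (1 + M) * δ ≤ (1 + M) * (r / (1 + M)) :=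
          mul_le_mul_of_nonneg_left h (by positivity)
      _ = r := by field_simp
  have hδ3 : K2 * δ ≤ A ^ 2 / 2 := by
    have h : δ ≤ (A ^ 2 / 2) / (K2 + 1) := le_trans (min_le_right _ _) (min_le_left _ _)
    calc K2 * δ ≤ (K2 + 1) * ((A ^ 2 / 2) / (K2 + 1)) := by
          apply mul_le_mul (by linarith) h hδ0.le (by positivity)
      _ = A ^ 2 / 2 := by field_simp
  have hδ4 : C * δ ≤ 1 / 2 := by
    have h : δ ≤ 1 / (2 * C) := le_trans (min_le_right _ _) (min_le_right _ _)
    calc C * δ ≤ C * (1 / (2 * C)) := mul_le_mul_of_nonneg_left h hC0.le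
      _ = 1 / 2 := by field_simp
  refine ⟨δ, hδ0, C, hC0, hδ4, fun x he => ?_⟩
  set e := x - α with he'
  by_cases he0 : e = 0
  · have hxα : x = α := by rw [sub_eq_zero] at he0; exact he0
    subst hxα
    simp [hroot, ← he', he0]
  -- now e ≠ 0
  have habs : 0 < |e| := abs_pos.2 he0
  have hxball : x ∈ Metric.closedBall α r := by
    simp only [Metric.mem_closedBall, Real.dist_eq]
    exact le_trans he hδr
  have hαball : α ∈ Metric.closedBall α r := by simp [hr.le]
  -- first-order estimate on f x
  have hs : |f x - a * e| ≤ L * |e| * |e| := by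
    have h := steffensen_mvt f α a L r hL hdiff hlip hαball hxball
    simpa [hroot, ← he', abs_nonneg, max_eq_right (abs_nonneg e)] using h
  have hfx : |f x| ≤ M * |e| := by
    have h1 : |f x| ≤ |a * e| + |f x - a * e| := by
      have := abs_add_le (a * e) (f x - a * e); simpa using this
    have h2 : L * |e| * |e| ≤ L * r * |e| :=
      mul_le_mul_of_nonneg_right
        (mul_le_mul_of_nonneg_left (le_trans he hδr) hL) (abs_nonneg e)
    calc |f x| ≤ |a * e| + |f x - a * e| := h1
      _ ≤ A * |e| + L * r * |e| := by
          rw [abs_mul]; exact add_le_add le_rfl (hs.trans h2)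
      _ = M * |e| := by ring
  have hyball : x + f x ∈ Metric.closedBall α r := by
    simp only [Metric.mem_closedBall, Real.dist_eq]
    have h1 : |x + f x - α| ≤ |e| + |f x| := by
      have : x + f x - α = e + f x := by rw [he']; ring
      rw [this]; exact abs_add_le _ _
    calc |x + f x - α| ≤ |e| + M * |e| := by linarith [hfx]
      _ = (1 + M) * |e| := by ring
      _ ≤ (1 + M) * δ := mul_le_mul_of_nonneg_left he (by positivity)
      _ ≤ r := hδ2
  have hmax : max |x - α| |x + f x - α| ≤ (1 + M) * |e| := by
    apply max_le
    · rw [← he']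
      have := mul_nonneg hM0.le (abs_nonneg e)
      linarith
    · have : x + f x - α = e + f x := by rw [he']; ring
      rw [this]
      calc |e + f x| ≤ |e| + |f x| := abs_add_le _ _
        _ ≤ (1 + M) * |e| := by linarith [hfx]
  have hs2 : |f (x + f x) - f x - a * f x| ≤ L * ((1 + M) * |e|) * (M * |e|) := by
    have h := steffensen_mvt f α a L r hL hdiff hlip hxball hyball
    have h2 : x + f x - x = f x := by ring
    rw [h2] at h
    calc |f (x + f x) - f x - a * f x|
        ≤ L * max |x - α| |x + f x - α| * |f x| := h
      _ ≤ L * ((1 + M) * |e|) * (M * |e|) := by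
          apply mul_le_mul
          · exact mul_le_mul_of_nonneg_left hmax hL
          · exact hfx
          · exact abs_nonneg _
          · positivity
  -- denominator
  set D := f (x + f x) - f x with hD
  set s := f x - a * e with hsdef
  set s2 := f (x + f x) - f x - a * f x with hs2def
  have hDeq : D = a ^ 2 * e + a * s + s2 := by
    rw [hD, hs2def, hsdef]; ring
  have hs2' : |s2| ≤ L * (1 + M) * M * |e| ^ 2 := by
    calc |s2| ≤ L * ((1 + M) * |e|) * (M * |e|) := hs2
      _ = L * (1 + M) * M * |e| ^ 2 := by ring
  have hs' : |s| ≤ L * |e| ^ 2 := by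
    calc |s| ≤ L * |e| * |e| := hs
      _ = L * |e| ^ 2 := by ring
  have hnoise : |a * s + s2| ≤ K2 * |e| ^ 2 := by
    calc |a * s + s2| ≤ |a| * |s| + |s2| := by
          refine le_trans (abs_add_le _ _) ?_; rw [abs_mul]
      _ ≤ A * (L * |e| ^ 2) + L * (1 + M) * M * |e| ^ 2 := by
          refine add_le_add (mul_le_mul_of_nonneg_left hs' (abs_nonneg a)) hs2'
      _ = K2 * |e| ^ 2 := by rw [hK2]; ring
  have hDlow : A ^ 2 / 2 * |e| ≤ |D| := by
    have h1 : |a ^ 2 * e| - |a * s + s2| ≤ |D| := by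
      have h := abs_sub_abs_le_abs_sub (a ^ 2 * e) (-(a * s + s2))
      rw [abs_neg, sub_neg_eq_add] at h
      have heq3 : a ^ 2 * e + (a * s + s2) = D := by rw [hDeq]; ring
      rw [heq3] at h
      exact h
    have h2 : |a ^ 2 * e| = A ^ 2 * |e| := by
      rw [abs_mul, abs_pow, hA]
    have h3 : K2 * |e| ^ 2 ≤ A ^ 2 / 2 * |e| := by
      calc K2 * |e| ^ 2 = K2 * |e| * |e| := by ring
        _ ≤ (A ^ 2 / 2) * |e| := by
            apply mul_le_mul_of_nonneg_right _ (abs_nonneg e)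
            calc K2 * |e| ≤ K2 * δ := mul_le_mul_of_nonneg_left he hK20
              _ ≤ A ^ 2 / 2 := hδ3
    linarith [hnoise]
  have hD0 : D ≠ 0 := by
    have hpos : 0 < |D| := lt_of_lt_of_le (by positivity) hDlow
    exact abs_pos.1 hpos
  -- numerator
  set N := e * D - f x ^ 2 with hN
  have hD2 : D = a * f x + s2 := by rw [hD, hs2def]; ring
  have hfxe : f x = a * e + s := by rw [hsdef]; ring
  have hNeq : N = e * s2 - f x * s := by
    rw [hN, hD2]
    linear_combination (-(f x)) * hfxe
  have hNbound : |N| ≤ K1 * |e| ^ 3 := by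
    rw [hNeq]
    calc |e * s2 - f x * s| ≤ |e| * |s2| + |f x| * |s| := by
          refine le_trans (abs_sub _ _) ?_
          rw [abs_mul, abs_mul]
      _ ≤ |e| * (L * (1 + M) * M * |e| ^ 2) + M * |e| * (L * |e| ^ 2) := by
          refine add_le_add (mul_le_mul_of_nonneg_left hs2' (abs_nonneg e)) ?_
          exact mul_le_mul hfx hs' (abs_nonneg s) (by positivity)
      _ = K1 * |e| ^ 3 := by rw [hK1]; ring
  -- final
  have hfinal : x - f x ^ 2 / D - α = N / D := by
    rw [hN]
    field_simp
    ring
  rw [hfinal, abs_div]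
  have hgoal : |N| / |D| ≤ K1 * |e| ^ 3 / (A ^ 2 / 2 * |e|) := by
    apply div_le_div₀ (by positivity) hNbound (by positivity) hDlow
  refine hgoal.trans ?_
  have heq2 : K1 * |e| ^ 3 / (A ^ 2 / 2 * |e|) = 2 * K1 / A ^ 2 * |e| ^ 2 := by
    have hgen : ∀ k b ε : ℝ, b ≠ 0 → ε ≠ 0 → k * ε ^ 3 / (b ^ 2 / 2 * ε) = 2 * k / b ^ 2 * ε ^ 2 := by
      intro k b ε hb hε
      field_simp
    exact hgen K1 A |e| hA0.ne' habs.ne'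
  rw [heq2]
  have : |e| ^ 2 = (x - α) ^ 2 := by rw [← he', sq_abs]
  rw [this]
  have hCC : 2 * K1 / A ^ 2 ≤ C := by rw [hC]; linarith
  exact mul_le_mul_of_nonneg_right hCC (sq_nonneg _)

open Filter

/-- Quadratic convergence of Steffensen's method near a simple root with `f'(α) ≠ -1`. -/
theorem steffensen_quadratic_convergence (f : ℝ → ℝ) (α : ℝ)
    (hf : ContDiffAt ℝ 2 f α) (hroot : f α = 0) (hsimple : deriv f α ≠ 0)
    (hne : deriv f α ≠ -1) :
    ∃ δ > (0 : ℝ), ∃ C > (0 : ℝ), ∀ x₀ : ℝ, |x₀ - α| < δ →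
      (∀ n : ℕ,
        |(fun x => x - f x ^ 2 / (f (x + f x) - f x))^[n + 1] x₀ - α| ≤
          C * |(fun x => x - f x ^ 2 / (f (x + f x) - f x))^[n] x₀ - α| ^ 2) ∧
      Tendsto (fun n => (fun x => x - f x ^ 2 / (f (x + f x) - f x))^[n] x₀)
        atTop (nhds α) := by
  -- Derive local regularity data from `ContDiffAt ℝ 2`.
  have h2 := hf.fderiv_right (m := 1) (by norm_num)
  have h3 : ContDiffAt ℝ 1 (fun x => fderiv ℝ f x 1) α := h2.clm_apply contDiffAt_const
  have h1 : ContDiffAt ℝ 1 (deriv f) α :=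
    h3.congr_of_eventuallyEq (Filter.Eventually.of_forall fun y => (fderiv_apply_one_eq_deriv).symm)
  obtain ⟨K, t, ht, hK⟩ := h1.exists_lipschitzOnWith
  have hd : ∀ᶠ y in nhds α, DifferentiableAt ℝ f y :=
    (hf.eventually (by norm_num)).mono fun y hy => hy.differentiableAt (by norm_num)
  obtain ⟨r, hr0, hrsub⟩ := Metric.nhds_basis_closedBall.mem_iff.1 (Filter.inter_mem ht hd)
  have hdiff : ∀ u ∈ Metric.closedBall α r, DifferentiableAt ℝ f u :=
    fun u hu => (hrsub hu).2
  have hlip : ∀ u ∈ Metric.closedBall α r, |deriv f u - deriv f α| ≤ (K : ℝ) * |u - α| := by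
    intro u hu
    have hα : α ∈ Metric.closedBall α r := by simp [hr0.le]
    have := hK.dist_le_mul u (hrsub hu).1 α (hrsub hα).1
    simpa [Real.dist_eq] using this
  obtain ⟨δ, hδ0, C, hC0, hCδ, hkey⟩ :=
    steffensen_key f α (deriv f α) (K : ℝ) r hr0 K.coe_nonneg hsimple hroot hdiff hlip
  refine ⟨δ, hδ0, C, hC0, fun x₀ hx₀ => ?_⟩
  set g := fun x => x - f x ^ 2 / (f (x + f x) - f x) with hg
  have half : ∀ x : ℝ, |x - α| ≤ δ → |g x - α| ≤ 1 / 2 * |x - α| := by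
    intro x hx
    calc |g x - α| ≤ C * (x - α) ^ 2 := hkey x hx
      _ = C * |x - α| * |x - α| := by rw [← sq_abs]; ring
      _ ≤ C * δ * |x - α| := by
          apply mul_le_mul_of_nonneg_right _ (abs_nonneg _)
          exact mul_le_mul_of_nonneg_left hx hC0.le
      _ ≤ 1 / 2 * |x - α| := mul_le_mul_of_nonneg_right hCδ (abs_nonneg _)
  have hiter : ∀ n : ℕ, |g^[n] x₀ - α| ≤ (1 / 2 : ℝ) ^ n * |x₀ - α| := by
    intro n
    induction n with
    | zero => simp
    | succ n ih =>
      have hball : |g^[n] x₀ - α| ≤ δ := by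
        have hpow : ((1 / 2 : ℝ) ^ n) ≤ 1 := by
          apply pow_le_one₀ <;> norm_num
        calc |g^[n] x₀ - α| ≤ (1 / 2 : ℝ) ^ n * |x₀ - α| := ih
          _ ≤ 1 * |x₀ - α| := mul_le_mul_of_nonneg_right hpow (abs_nonneg _)
          _ = |x₀ - α| := one_mul _
          _ ≤ δ := hx₀.le
      rw [Function.iterate_succ_apply']
      calc |g (g^[n] x₀) - α| ≤ 1 / 2 * |g^[n] x₀ - α| := half _ hball
        _ ≤ 1 / 2 * ((1 / 2 : ℝ) ^ n * |x₀ - α|) := by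
            apply mul_le_mul_of_nonneg_left ih (by norm_num)
        _ = (1 / 2 : ℝ) ^ (n + 1) * |x₀ - α| := by ring
  have hball : ∀ n : ℕ, |g^[n] x₀ - α| ≤ δ := by
    intro n
    have hpow : ((1 / 2 : ℝ) ^ n) ≤ 1 := by
      apply pow_le_one₀ <;> norm_num
    calc |g^[n] x₀ - α| ≤ (1 / 2 : ℝ) ^ n * |x₀ - α| := hiter n
      _ ≤ 1 * |x₀ - α| := mul_le_mul_of_nonneg_right hpow (abs_nonneg _)
      _ = |x₀ - α| := one_mul _
      _ ≤ δ := hx₀.le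
  constructor
  · intro n
    rw [Function.iterate_succ_apply']
    calc |g (g^[n] x₀) - α| ≤ C * (g^[n] x₀ - α) ^ 2 := hkey _ (hball n)
      _ = C * |g^[n] x₀ - α| ^ 2 := by rw [sq_abs]
  · rw [tendsto_iff_dist_tendsto_zero]
    have hb : Tendsto (fun n : ℕ => (1 / 2 : ℝ) ^ n * |x₀ - α|) atTop (nhds 0) := by
      have := tendsto_pow_atTop_nhds_zero_of_lt_one (by norm_num : (0:ℝ) ≤ 1 / 2)
        (by norm_num : (1 / 2 : ℝ) < 1)
      simpa using this.mul_const |x₀ - α|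
    apply squeeze_zero (fun n => dist_nonneg) _ hb
    intro n
    rw [Real.dist_eq]
    exact hiter n
end

section
/- Let f be analytic near a simple root α with c_1 = f'(α), c_2 = f''(α)/2, and let w = x + f(x)³. Then the divided difference f[w,x] = (f(w)-f(x))/(w-x) satisfies f[w,x] - f'(x) = O((x-α)³) as x → α; in particular, replacing f'(x) by f[w,x] in a Newton-type step y = x - f(x)/f[w,x] preserves the expansion y - α = (c_2/c_1)(x-α)² + O((x-α)³). -/
open Asymptotics Metric Filter

private lemma seg_abs_le {x w t : ℝ} (h : t ∈ segment ℝ x w) : |t - x| ≤ |w - x| := by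
  obtain ⟨a, b, ha, hb, hab, rfl⟩ := h
  have hx : a • x + b • w - x = b * (w - x) := by
    have : a = 1 - b := by linarith
    simp [this, smul_eq_mul]; ring
  rw [hx, abs_mul, abs_of_nonneg hb]
  nlinarith [abs_nonneg (w - x)]

private lemma bound_step {g : ℝ → ℝ} {α C δ : ℝ} {k : ℕ} (hC : 0 ≤ C)
    (hdiff : ∀ t ∈ ball α δ, DifferentiableAt ℝ g t)
    (hg0 : g α = 0)
    (hbound : ∀ t ∈ ball α δ, |deriv g t| ≤ C * |t - α| ^ k)
    {x : ℝ} (hx : x ∈ ball α δ) : |g x| ≤ C * |x - α| ^ (k + 1) := by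
  rcases le_or_gt δ 0 with hδ | hδ
  · exact absurd hx (by simp [ball_eq_empty.2 hδ])
  have hαb : α ∈ ball α δ := mem_ball_self hδ
  have hsub : segment ℝ α x ⊆ ball α δ := (convex_ball α δ).segment_subset hαb hx
  have key := Convex.norm_image_sub_le_of_norm_deriv_le
    (f := g) (C := C * |x - α| ^ k) (s := segment ℝ α x)
    (fun t ht => hdiff t (hsub ht))
    (fun t ht => by
      rw [Real.norm_eq_abs]
      refine (hbound t (hsub ht)).trans ?_
      exact mul_le_mul_of_nonneg_left (pow_le_pow_left₀ (abs_nonneg _) (seg_abs_le ht) k) hC)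
    (convex_segment α x) (left_mem_segment ℝ α x) (right_mem_segment ℝ α x)
  rw [hg0, sub_zero, Real.norm_eq_abs, Real.norm_eq_abs] at key
  calc |g x| ≤ C * |x - α| ^ k * |x - α| := key
  _ = C * |x - α| ^ (k + 1) := by ring

private lemma aux_div (x α fx cc d : ℝ) (hd : d ≠ 0) :
    x - fx / d - α - cc * (x - α) ^ 2 = ((x - α) * d - fx - cc * (x - α) ^ 2 * d) / d := by
  field_simp
  ring

/-- With `w = x + f(x)³`, the divided difference `f[w,x]` approximates `f'(x)` to third
order in `x - α`, and the derivative-free Newton-type step `y = x - f x / f[w,x]`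
retains the expansion `y - α = (c₂/c₁)(x - α)² + O((x - α)³)`. -/
theorem cubic_perturbation_divided_difference (f : ℝ → ℝ) (α : ℝ)
    (hf : AnalyticAt ℝ f α) (hroot : f α = 0) (hsimple : deriv f α ≠ 0) :
    ((fun x => (f (x + f x ^ 3) - f x) / (f x ^ 3) - deriv f x)
        =O[nhdsWithin α {α}ᶜ] fun x => (x - α) ^ 3) ∧
      ((fun x => (x - f x / ((f (x + f x ^ 3) - f x) / (f x ^ 3))) - α -
          (iteratedDeriv 2 f α / 2 / deriv f α) * (x - α) ^ 2)
        =O[nhdsWithin α {α}ᶜ] fun x => (x - α) ^ 3) := by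
  classical
  set l := nhdsWithin α {α}ᶜ with hl
  set c1 := deriv f α with hc1
  set c2 := iteratedDeriv 2 f α / 2 with hc2
  obtain ⟨r, hr, hA⟩ := hf.exists_ball_analyticOnNhd
  have hA1 : AnalyticOnNhd ℝ (deriv f) (ball α r) := hA.deriv
  have h2eq : iteratedDeriv 2 f = deriv (deriv f) := by
    rw [show (2 : ℕ) = 1 + 1 from rfl, iteratedDeriv_succ, iteratedDeriv_one]
  have h3eq : iteratedDeriv 3 f = deriv (iteratedDeriv 2 f) := iteratedDeriv_succ
  have hA2 : AnalyticOnNhd ℝ (iteratedDeriv 2 f) (ball α r) := h2eq ▸ hA1.deriv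
  have hA3 : AnalyticOnNhd ℝ (iteratedDeriv 3 f) (ball α r) := h3eq ▸ hA2.deriv
  -- a bound for the third derivative near α
  set M := |iteratedDeriv 3 f α| + 1 with hM
  have hM0 : 0 ≤ M := by positivity
  have hδex : ∃ δ > 0, ∀ t ∈ ball α δ, t ∈ ball α r ∧ |iteratedDeriv 3 f t| ≤ M := by
    rw [← Metric.eventually_nhds_iff_ball]
    have h1 : ∀ᶠ t in nhds α, t ∈ ball α r := isOpen_ball.eventually_mem (mem_ball_self hr)
    have hc : ContinuousAt (iteratedDeriv 3 f) α := (hA3 α (mem_ball_self hr)).continuousAt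
    have h2 : ∀ᶠ t in nhds α, |iteratedDeriv 3 f t| ≤ M := by
      have : ∀ᶠ t in nhds α, iteratedDeriv 3 f t ∈ ball (iteratedDeriv 3 f α) 1 :=
        hc (ball_mem_nhds _ one_pos)
      refine this.mono fun t ht => ?_
      rw [mem_ball, Real.dist_eq] at ht
      calc |iteratedDeriv 3 f t| ≤ |iteratedDeriv 3 f t - iteratedDeriv 3 f α| + |iteratedDeriv 3 f α| := by
            simpa using abs_add_le (iteratedDeriv 3 f t - iteratedDeriv 3 f α) (iteratedDeriv 3 f α)
      _ ≤ M := by rw [hM]; linarith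
    exact (h1.and h2).mono fun t ht => ht
  obtain ⟨δ, hδ0, hδ⟩ := hδex
  have hδr : ∀ t ∈ ball α δ, t ∈ ball α r := fun t ht => (hδ t ht).1
  -- the three Taylor-type remainders
  set g3 : ℝ → ℝ := fun t => iteratedDeriv 2 f t - 2 * c2 with hg3
  set g2 : ℝ → ℝ := fun t => deriv f t - c1 - 2 * c2 * (t - α) with hg2
  set g1 : ℝ → ℝ := fun t => f t - c1 * (t - α) - c2 * (t - α) ^ 2 with hg1
  have hd3 : ∀ t ∈ ball α δ, DifferentiableAt ℝ g3 t := fun t ht =>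
    ((hA2 t (hδr t ht)).differentiableAt).sub_const _
  have hder3 : ∀ t ∈ ball α δ, deriv g3 t = iteratedDeriv 3 f t := by
    intro t ht
    rw [hg3, deriv_sub_const, ← h3eq]
  have hb3 : ∀ x ∈ ball α δ, |g3 x| ≤ M * |x - α| ^ 1 := by
    intro x hx
    refine bound_step (k := 0) hM0 hd3 (by simp [hg3, hc2]; ring) (fun t ht => ?_) hx
    rw [hder3 t ht, pow_zero, mul_one]; exact (hδ t ht).2
  have hd2 : ∀ t ∈ ball α δ, DifferentiableAt ℝ g2 t := by
    intro t ht
    exact (((hA1 t (hδr t ht)).differentiableAt).sub_const _).sub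
      ((differentiableAt_id.sub_const _).const_mul _)
  have hder2 : ∀ t ∈ ball α δ, deriv g2 t = g3 t := by
    intro t ht
    have h1 : HasDerivAt (deriv f) (iteratedDeriv 2 f t) t := by
      rw [h2eq]; exact (hA1 t (hδr t ht)).differentiableAt.hasDerivAt
    have h2 : HasDerivAt (fun t => 2 * c2 * (t - α)) (2 * c2) t := by
      simpa using ((hasDerivAt_id t).sub_const α).const_mul (2 * c2)
    have := ((h1.sub_const c1).sub h2).deriv
    rw [hg2]; rw [show (fun t => deriv f t - c1 - 2 * c2 * (t - α)) = fun t => (deriv f t - c1) - 2 * c2 * (t - α) from rfl]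
    exact this
  have hb2 : ∀ x ∈ ball α δ, |g2 x| ≤ M * |x - α| ^ 2 := by
    intro x hx
    refine bound_step (k := 1) hM0 hd2 (by simp [hg2, hc1]) (fun t ht => ?_) hx
    rw [hder2 t ht]; exact hb3 t ht
  have hd1 : ∀ t ∈ ball α δ, DifferentiableAt ℝ g1 t := by
    intro t ht
    exact (((hA t (hδr t ht)).differentiableAt).sub
      ((differentiableAt_id.sub_const _).const_mul _)).sub
      (((differentiableAt_id.sub_const _).pow 2).const_mul _)
  have hder1 : ∀ t ∈ ball α δ, deriv g1 t = g2 t := by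
    intro t ht
    have h1 : HasDerivAt f (deriv f t) t := (hA t (hδr t ht)).differentiableAt.hasDerivAt
    have h2 : HasDerivAt (fun t => c1 * (t - α)) c1 t := by
      simpa using ((hasDerivAt_id t).sub_const α).const_mul c1
    have h3 : HasDerivAt (fun t => c2 * (t - α) ^ 2) (2 * c2 * (t - α)) t := by
      have h := (((hasDerivAt_id t).sub_const α).pow 2).const_mul c2
      exact h.congr_deriv (by simp; ring)
    have := ((h1.sub h2).sub h3).deriv
    rw [hg1]; exact this
  have hb1 : ∀ x ∈ ball α δ, |g1 x| ≤ M * |x - α| ^ 3 := by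
    intro x hx
    refine bound_step (k := 2) hM0 hd1 (by simp [hg1, hroot]) (fun t ht => ?_) hx
    rw [hder1 t ht]; exact hb2 t ht
  -- bound for the second derivative and Lipschitz estimate for deriv f
  set M2 := M * δ + 2 * |c2| with hM2
  have hM20 : 0 ≤ M2 := by positivity
  have hi2b : ∀ t ∈ ball α δ, |iteratedDeriv 2 f t| ≤ M2 := by
    intro t ht
    have h1 := hb3 t ht
    have h2 : |t - α| < δ := by rw [← Real.dist_eq]; exact mem_ball.1 ht
    have h3 : |iteratedDeriv 2 f t| ≤ |g3 t| + 2 * |c2| := by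
      rw [hg3]
      have := abs_add_le (iteratedDeriv 2 f t - 2 * c2) (2 * c2)
      simp only [sub_add_cancel] at this
      calc |iteratedDeriv 2 f t| ≤ |iteratedDeriv 2 f t - 2 * c2| + |2 * c2| := this
      _ ≤ _ := by rw [abs_mul]; simp
    nlinarith [abs_nonneg (t - α), abs_nonneg (g3 t)]
  have hLip : ∀ s ∈ ball α δ, ∀ t ∈ ball α δ, |deriv f s - deriv f t| ≤ M2 * |s - t| := by
    intro s hs t ht
    have := Convex.norm_image_sub_le_of_norm_deriv_le (f := deriv f) (C := M2) (s := ball α δ)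
      (fun u hu => (hA1 u (hδr u hu)).differentiableAt)
      (fun u hu => by rw [Real.norm_eq_abs, ← h2eq]; exact hi2b u hu)
      (convex_ball α δ) ht hs
    simpa [Real.norm_eq_abs] using this
  -- second-order Taylor estimate
  have hTay : ∀ x ∈ ball α δ, ∀ w ∈ ball α δ,
      |f w - f x - deriv f x * (w - x)| ≤ M2 * |w - x| ^ 2 := by
    intro x hx w hw
    set φ : ℝ → ℝ := fun t => f t - deriv f x * t with hφ
    have hsub : segment ℝ x w ⊆ ball α δ := (convex_ball α δ).segment_subset hx hw
    have key := Convex.norm_image_sub_le_of_norm_deriv_le (f := φ) (C := M2 * |w - x|)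
      (s := segment ℝ x w)
      (fun t ht => ((hA t (hδr t (hsub ht))).differentiableAt).sub
        (differentiableAt_id.const_mul _))
      (fun t ht => by
        have hd : HasDerivAt φ (deriv f t - deriv f x) t := by
          have h1 : HasDerivAt f (deriv f t) t :=
            (hA t (hδr t (hsub ht))).differentiableAt.hasDerivAt
          have h2 : HasDerivAt (fun t => deriv f x * t) (deriv f x) t := by
            simpa using (hasDerivAt_id t).const_mul (deriv f x)
          exact h1.sub h2
        rw [hd.deriv, Real.norm_eq_abs]
        calc |deriv f t - deriv f x| ≤ M2 * |t - x| := hLip t (hsub ht) x hx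
        _ ≤ M2 * |w - x| := mul_le_mul_of_nonneg_left (seg_abs_le ht) hM20)
      (convex_segment x w) (left_mem_segment ℝ x w) (right_mem_segment ℝ x w)
    have hφeq : φ w - φ x = f w - f x - deriv f x * (w - x) := by rw [hφ]; ring
    rw [hφeq, Real.norm_eq_abs, Real.norm_eq_abs] at key
    calc |f w - f x - deriv f x * (w - x)| ≤ M2 * |w - x| * |w - x| := key
    _ = M2 * |w - x| ^ 2 := by ring
  -- linear bound on f near α
  set K := |c1| + |c2| * δ + M * δ ^ 2 with hK
  have hK0 : 0 ≤ K := by positivity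
  have hflin : ∀ x ∈ ball α δ, |f x| ≤ K * |x - α| := by
    intro x hx
    have h1 := hb1 x hx
    have h2 : |x - α| < δ := by rw [← Real.dist_eq]; exact mem_ball.1 hx
    have hfx : f x = g1 x + c1 * (x - α) + c2 * (x - α) ^ 2 := by rw [hg1]; ring
    have h3 : |f x| ≤ |g1 x| + |c1| * |x - α| + |c2| * |x - α| ^ 2 := by
      rw [hfx]
      calc |g1 x + c1 * (x - α) + c2 * (x - α) ^ 2|
          ≤ |g1 x + c1 * (x - α)| + |c2 * (x - α) ^ 2| := abs_add_le _ _
      _ ≤ |g1 x| + |c1 * (x - α)| + |c2 * (x - α) ^ 2| := by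
            have := abs_add_le (g1 x) (c1 * (x - α)); linarith
      _ = _ := by rw [abs_mul, abs_mul, abs_pow]
    have ha := abs_nonneg (x - α)
    have hsq : |x - α| ^ 2 ≤ δ ^ 2 := by nlinarith
    have t1 := mul_le_mul_of_nonneg_left hsq (mul_nonneg hM0 ha)
    have t2 := mul_le_mul_of_nonneg_left h2.le (abs_nonneg c2)
    nlinarith [t1, t2]
  -- nonvanishing of f on a punctured neighborhood
  have hc1pos : 0 < |c1| := abs_pos.2 hsimple
  set ε := min δ (min 1 (|c1| / (|c2| + M + 1))) with hε
  have hεpos : 0 < ε := by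
    refine lt_min hδ0 (lt_min one_pos ?_)
    positivity
  have hεδ : ε ≤ δ := min_le_left _ _
  have hε1 : ε ≤ 1 := (min_le_right _ _).trans (min_le_left _ _)
  have hεc : ε ≤ |c1| / (|c2| + M + 1) := (min_le_right _ _).trans (min_le_right _ _)
  have hfne : ∀ x ∈ ball α ε, x ≠ α → f x ≠ 0 := by
    intro x hx hxα hfx0
    have hxδ : x ∈ ball α δ := ball_subset_ball hεδ hx
    have h1 := hb1 x hxδ
    have h2 : |x - α| < ε := by rw [← Real.dist_eq]; exact mem_ball.1 hx
    have ha0 : 0 < |x - α| := abs_pos.2 (sub_ne_zero.2 hxα)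
    have hfx : c1 * (x - α) = -(g1 x + c2 * (x - α) ^ 2) := by
      have : f x = g1 x + c1 * (x - α) + c2 * (x - α) ^ 2 := by rw [hg1]; ring
      rw [hfx0] at this; linarith
    have h3 : |c1| * |x - α| ≤ M * |x - α| ^ 3 + |c2| * |x - α| ^ 2 := by
      have := congrArg abs hfx
      rw [abs_mul, abs_neg] at this
      have h4 : |g1 x + c2 * (x - α) ^ 2| ≤ |g1 x| + |c2| * |x - α| ^ 2 := by
        calc |g1 x + c2 * (x - α) ^ 2| ≤ |g1 x| + |c2 * (x - α) ^ 2| := abs_add_le _ _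
        _ = _ := by rw [abs_mul, abs_pow]
      linarith
    have ha1 : |x - α| ≤ 1 := by linarith
    have haε : |x - α| * (|c2| + M + 1) < |c1| := by
      have hd : 0 < |c2| + M + 1 := by positivity
      have : |x - α| < |c1| / (|c2| + M + 1) := lt_of_lt_of_le h2 hεc
      exact (lt_div_iff₀ hd).1 this
    have q1 : M * |x - α| ^ 3 ≤ M * |x - α| ^ 2 := by
      have h := mul_le_mul_of_nonneg_left ha1 (mul_nonneg hM0 (mul_nonneg ha0.le ha0.le))
      calc M * |x - α| ^ 3 = M * (|x - α| * |x - α|) * |x - α| := by ring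
      _ ≤ M * (|x - α| * |x - α|) * 1 := by linarith only [h]
      _ = M * |x - α| ^ 2 := by ring
    have q2' := mul_lt_mul_of_pos_right haε ha0
    have e1 : |x - α| * (|c2| + M + 1) * |x - α| = (M + |c2|) * |x - α| ^ 2 + |x - α| ^ 2 := by
      ring
    rw [e1] at q2'
    have hsq : 0 < |x - α| ^ 2 := by positivity
    have q2 : (M + |c2|) * |x - α| ^ 2 < |c1| * |x - α| := by linarith only [q2', hsq]
    have q3 : M * |x - α| ^ 2 + |c2| * |x - α| ^ 2 = (M + |c2|) * |x - α| ^ 2 := by ring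
    linarith only [q1, q2, q3, h3]
  -- eventual facts in the punctured neighborhood
  have hwcont : ContinuousAt (fun x => x + f x ^ 3) α :=
    continuousAt_id.add (hf.continuousAt.pow 3)
  have hwα : α + f α ^ 3 = α := by rw [hroot]; ring
  have hev : ∀ᶠ x in l, x ∈ ball α δ ∧ (x + f x ^ 3) ∈ ball α δ ∧ f x ≠ 0 ∧ |f x| ≤ K * |x - α| := by
    have e1 : ∀ᶠ x in nhds α, x ∈ ball α δ := isOpen_ball.eventually_mem (mem_ball_self hδ0)
    have e2 : ∀ᶠ x in nhds α, (x + f x ^ 3) ∈ ball α δ := by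
      have hmem : ball α δ ∈ nhds (α + f α ^ 3) := by
        rw [hwα]; exact isOpen_ball.mem_nhds (mem_ball_self hδ0)
      exact hwcont hmem
    have e3 : ∀ᶠ x in nhds α, x ∈ ball α ε := isOpen_ball.eventually_mem (mem_ball_self hεpos)
    have e4 : ∀ᶠ x in l, x ≠ α := by
      have : ∀ᶠ x in l, x ∈ ({α}ᶜ : Set ℝ) := self_mem_nhdsWithin
      exact this.mono fun x hx => hx
    have e5 : ∀ᶠ x in l, x ∈ ball α δ ∧ (x + f x ^ 3) ∈ ball α δ ∧ x ∈ ball α ε :=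
      ((e1.and (e2.and e3)).filter_mono nhdsWithin_le_nhds).mono (by tauto)
    filter_upwards [e5, e4] with x hx hxα
    exact ⟨hx.1, hx.2.1, hfne x hx.2.2 hxα, hflin x hx.1⟩
  -- Part 1
  have part1 : (fun x => (f (x + f x ^ 3) - f x) / (f x ^ 3) - deriv f x) =O[l]
      fun x => (x - α) ^ 3 := by
    rw [isBigO_iff]
    refine ⟨M2 * K ^ 3, ?_⟩
    filter_upwards [hev] with x hx
    obtain ⟨hxδ, hwδ, hfx, hflx⟩ := hx
    have hh : f x ^ 3 ≠ 0 := pow_ne_zero _ hfx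
    have key := hTay x hxδ (x + f x ^ 3) hwδ
    have hwx : x + f x ^ 3 - x = f x ^ 3 := by ring
    rw [hwx] at key
    have heq : (f (x + f x ^ 3) - f x) / f x ^ 3 - deriv f x =
        (f (x + f x ^ 3) - f x - deriv f x * f x ^ 3) / f x ^ 3 := by field_simp
    rw [Real.norm_eq_abs, Real.norm_eq_abs, heq, abs_div]
    have habs : 0 < |f x ^ 3| := abs_pos.2 hh
    calc |f (x + f x ^ 3) - f x - deriv f x * f x ^ 3| / |f x ^ 3|
        ≤ M2 * |f x ^ 3| ^ 2 / |f x ^ 3| := by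
          gcongr
      _ = M2 * |f x ^ 3| := by rw [pow_two]; field_simp
      _ = M2 * |f x| ^ 3 := by rw [abs_pow]
      _ ≤ M2 * (K * |x - α|) ^ 3 := by
          exact mul_le_mul_of_nonneg_left (pow_le_pow_left₀ (abs_nonneg _) hflx 3) hM20
      _ = M2 * K ^ 3 * |x - α| ^ 3 := by ring
      _ = M2 * K ^ 3 * |(x - α) ^ 3| := by rw [abs_pow]
  -- Part 2
  set D : ℝ → ℝ := fun x => (f (x + f x ^ 3) - f x) / (f x ^ 3) with hDdef
  have hP3 : (fun x => D x - deriv f x) =O[l] fun x => (x - α) ^ 3 := part1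
  have hP2 : g2 =O[l] fun x => (x - α) ^ 2 := by
    rw [isBigO_iff]
    refine ⟨M, ?_⟩
    filter_upwards [hev] with x hx
    rw [Real.norm_eq_abs, Real.norm_eq_abs, abs_pow]
    exact hb2 x hx.1
  have hP1 : g1 =O[l] fun x => (x - α) ^ 3 := by
    rw [isBigO_iff]
    refine ⟨M, ?_⟩
    filter_upwards [hev] with x hx
    rw [Real.norm_eq_abs, Real.norm_eq_abs, abs_pow]
    exact hb1 x hx.1
  have htendsub : Tendsto (fun x : ℝ => x - α) l (nhds 0) := by
    have h := (continuousAt_id.sub continuousAt_const : ContinuousAt (fun x : ℝ => x - α) α)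
    have h2 := h.tendsto.mono_left (nhdsWithin_le_nhds (s := {α}ᶜ))
    have e : ((id - fun _ : ℝ => α : ℝ → ℝ)) α = 0 := by simp
    rw [e] at h2; exact h2
  have he1 : (fun x : ℝ => x - α) =O[l] fun _ => (1 : ℝ) := htendsub.isBigO_one ℝ
  have htend3 : Tendsto (fun x : ℝ => (x - α) ^ 3) l (nhds 0) := by
    have := htendsub.pow 3
    simpa using this
  have hderivt : Tendsto (deriv f) l (nhds c1) :=
    ((hA1 α (mem_ball_self hr)).continuousAt.tendsto).mono_left nhdsWithin_le_nhds
  have hDt : Tendsto D l (nhds c1) := by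
    have h0 : Tendsto (fun x => D x - deriv f x) l (nhds 0) := hP3.trans_tendsto htend3
    have := h0.add hderivt
    simpa using this
  have hDne : ∀ᶠ x in l, D x ≠ 0 := hDt.eventually_ne hsimple
  have hinvD : (fun x => (D x)⁻¹) =O[l] fun _ => (1 : ℝ) := (hDt.inv₀ hsimple).isBigO_one ℝ
  set N : ℝ → ℝ := fun x => (x - α) * D x - f x - c2 / c1 * (x - α) ^ 2 * D x with hNdef
  have hNeq : ∀ x, N x = (x - α) * g2 x + (x - α) * (D x - deriv f x) - g1 x -
      c2 / c1 * (x - α) ^ 2 * (2 * c2 * (x - α) + g2 x + (D x - deriv f x)) := by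
    intro x
    rw [hNdef, hg1, hg2]
    field_simp
    ring
  have he2e : (fun x : ℝ => (x - α) ^ 2) =O[l] fun x => x - α := by
    have := (isBigO_refl (fun x : ℝ => x - α) l).mul he1
    exact this.congr (fun x => by ring) (fun x => by ring)
  have he3e : (fun x : ℝ => (x - α) ^ 3) =O[l] fun x => x - α := by
    have := (isBigO_refl (fun x : ℝ => x - α) l).mul (he1.mul he1)
    exact this.congr (fun x => by ring) (fun x => by ring)
  have hterm1 : (fun x => (x - α) * g2 x) =O[l] fun x => (x - α) ^ 3 := by
    have := (isBigO_refl (fun x : ℝ => x - α) l).mul hP2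
    exact this.congr (fun x => rfl) (fun x => by ring)
  have hterm2 : (fun x => (x - α) * (D x - deriv f x)) =O[l] fun x => (x - α) ^ 3 := by
    have := he1.mul hP3
    exact this.congr (fun x => rfl) (fun x => by ring)
  have hinner : (fun x => 2 * c2 * (x - α) + g2 x + (D x - deriv f x)) =O[l]
      fun x => x - α := by
    have h1 : (fun x : ℝ => 2 * c2 * (x - α)) =O[l] fun x => x - α :=
      (isBigO_refl (fun x : ℝ => x - α) l).const_mul_left (2 * c2)
    exact (h1.add (hP2.trans he2e)).add (hP3.trans he3e)
  have hterm4 : (fun x => c2 / c1 * (x - α) ^ 2 * (2 * c2 * (x - α) + g2 x + (D x - deriv f x)))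
      =O[l] fun x => (x - α) ^ 3 := by
    have h1 := ((isBigO_refl (fun x : ℝ => (x - α) ^ 2) l).mul hinner).const_mul_left (c2 / c1)
    exact h1.congr (fun x => by ring) (fun x => by ring)
  have hN : N =O[l] fun x => (x - α) ^ 3 := by
    have h := ((hterm1.add hterm2).sub hP1).sub hterm4
    exact h.congr (fun x => (hNeq x).symm) (fun x => rfl)
  have heq2 : (fun x => (x - f x / D x) - α - c2 / c1 * (x - α) ^ 2) =ᶠ[l]
      fun x => N x / D x := by
    filter_upwards [hDne] with x hDx
    exact aux_div x α (f x) (c2 / c1) (D x) hDx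
  have hfinal : (fun x => (x - f x / D x) - α - c2 / c1 * (x - α) ^ 2) =O[l]
      fun x => (x - α) ^ 3 := by
    have h := hN.mul hinvD
    simp only [mul_one] at h
    have h0 : (fun x => N x / D x) =O[l] fun x => (x - α) ^ 3 := by
      simpa [div_eq_mul_inv] using h
    exact h0.congr' heq2.symm EventuallyEq.rfl
  exact ⟨part1, hfinal⟩
end

section
/- Let A : ℝ → ℝ be three times differentiable at 0 with A(0) = 1, A'(0) = 0, A''(0) = 0. Let f be analytic near a simple root α, and define y = x - A(f(x)/f'(x)) · f(x)/f'(x). Then y - α = (c_2/c_1)(x-α)² + O((x-α)³), i.e., the weighted Newton step has the same second-order error constant c_2/c_1 as the unweighted Newton step. -/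
open Asymptotics Filter Metric

private lemma my_contDiffAt_deriv {g : ℝ → ℝ} {x : ℝ} {m n : WithTop ℕ∞}
    (h : ContDiffAt ℝ n g x) (hmn : m + 1 ≤ n) : ContDiffAt ℝ m (deriv g) x := by
  have h1 : ContDiffAt ℝ m (fderiv ℝ g) x := h.fderiv_right hmn
  have h2 : ContDiffAt ℝ m (fun y => fderiv ℝ g y 1) x := h1.clm_apply contDiffAt_const
  exact h2

private lemma my_deriv_isBigO {g : ℝ → ℝ} {x₀ : ℝ}
    (h : DifferentiableAt ℝ g x₀) (h0 : g x₀ = 0) :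
    g =O[nhds x₀] fun x => x - x₀ := by
  have := h.hasDerivAt.hasFDerivAt.isBigO_sub
  simpa [h0] using this

private lemma my_mvt_step {g : ℝ → ℝ} {x₀ : ℝ} {k : ℕ}
    (hev : ∀ᶠ x in nhds x₀, DifferentiableAt ℝ g x) (h0 : g x₀ = 0)
    (hd : deriv g =O[nhds x₀] fun x => (x - x₀) ^ k) :
    g =O[nhds x₀] fun x => (x - x₀) ^ (k + 1) := by
  obtain ⟨C, hC⟩ := hd.bound
  obtain ⟨ε, hε, hball⟩ := Metric.eventually_nhds_iff_ball.mp (hC.and hev)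
  rw [isBigO_iff]
  refine ⟨|C|, ?_⟩
  rw [Metric.eventually_nhds_iff_ball]
  refine ⟨ε, hε, fun x hx => ?_⟩
  have hxd : |x - x₀| < ε := by simpa [Real.dist_eq] using hx
  have hsub : closedBall x₀ |x - x₀| ⊆ ball x₀ ε := fun y hy => by
    simp only [mem_closedBall, Real.dist_eq] at hy
    simp only [mem_ball, Real.dist_eq]
    exact lt_of_le_of_lt hy hxd
  have hdiff : ∀ y ∈ closedBall x₀ |x - x₀|, DifferentiableAt ℝ g y :=
    fun y hy => (hball y (hsub hy)).2
  have hbound : ∀ y ∈ closedBall x₀ |x - x₀|, ‖deriv g y‖ ≤ |C| * |x - x₀| ^ k := by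
    intro y hy
    have hb := (hball y (hsub hy)).1
    have hyx : |y - x₀| ≤ |x - x₀| := by simpa [Real.dist_eq] using hy
    calc ‖deriv g y‖ ≤ C * ‖(y - x₀) ^ k‖ := hb
      _ ≤ |C| * |y - x₀| ^ k := by
          rw [Real.norm_eq_abs, abs_pow]
          exact mul_le_mul_of_nonneg_right (le_abs_self C) (by positivity)
      _ ≤ |C| * |x - x₀| ^ k :=
          mul_le_mul_of_nonneg_left (pow_le_pow_left₀ (abs_nonneg _) hyx k) (abs_nonneg _)
  have hx0m : x₀ ∈ closedBall x₀ |x - x₀| := mem_closedBall_self (abs_nonneg _)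
  have hxm : x ∈ closedBall x₀ |x - x₀| := by simp [mem_closedBall, Real.dist_eq]
  have key := (convex_closedBall x₀ |x - x₀|).norm_image_sub_le_of_norm_deriv_le
      hdiff hbound hx0m hxm
  rw [h0, sub_zero] at key
  calc ‖g x‖ ≤ |C| * |x - x₀| ^ k * ‖x - x₀‖ := key
    _ = |C| * ‖(x - x₀) ^ (k + 1)‖ := by
        rw [Real.norm_eq_abs, Real.norm_eq_abs, abs_pow, pow_succ]; ring

/-- A weighted Newton step `y = x - A(f x / f' x) · f x / f' x` with `A(0) = 1`,
`A'(0) = 0`, `A''(0) = 0` has the same second-order error constant `c₂/c₁` as the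
unweighted Newton step. -/
theorem weighted_newton_step_expansion (f A : ℝ → ℝ) (α : ℝ)
    (hf : AnalyticAt ℝ f α) (hroot : f α = 0) (hsimple : deriv f α ≠ 0)
    (hA : ContDiffAt ℝ 3 A 0) (hA0 : A 0 = 1) (hA1 : deriv A 0 = 0)
    (hA2 : iteratedDeriv 2 A 0 = 0) :
    (fun x => (x - A (f x / deriv f x) * (f x / deriv f x)) - α -
        (iteratedDeriv 2 f α / 2 / deriv f α) * (x - α) ^ 2)
      =O[nhdsWithin α {α}ᶜ] fun x => (x - α) ^ 3 := by
  set c1 : ℝ := deriv f α with hc1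
  set c2 : ℝ := iteratedDeriv 2 f α / 2 with hc2
  set t : ℝ → ℝ := fun x => f x / deriv f x with ht
  -- basic regularity
  have hfC : ContDiffAt ℝ 3 f α := hf.contDiffAt
  have hfev : ∀ᶠ x in nhds α, ContDiffAt ℝ 3 f x := hfC.eventually (by simp)
  have hfdiff : ∀ᶠ x in nhds α, DifferentiableAt ℝ f x :=
    hfev.mono fun y hy => hy.differentiableAt (by norm_num)
  have hdfC : ContDiffAt ℝ 2 (deriv f) α := my_contDiffAt_deriv hfC (by norm_num)
  have hdfdiff : ∀ᶠ x in nhds α, DifferentiableAt ℝ (deriv f) x :=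
    hfev.mono fun y hy => (my_contDiffAt_deriv hy (by norm_num) :
      ContDiffAt ℝ 2 (deriv f) y).differentiableAt (by norm_num)
  have hddfdiff : DifferentiableAt ℝ (deriv (deriv f)) α :=
    (my_contDiffAt_deriv hdfC (by norm_num) : ContDiffAt ℝ 1 (deriv (deriv f)) α
      ).differentiableAt (by norm_num)
  have hid2 : iteratedDeriv 2 f α = deriv (deriv f) α := by
    rw [iteratedDeriv_succ, iteratedDeriv_one]
  -- g2 : second derivative expansion
  have hg2 : (fun x => deriv (deriv f) x - 2 * c2) =O[nhds α] fun x => x - α := by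
    apply my_deriv_isBigO
    · exact hddfdiff.sub_const _
    · simp [hc2, hid2]; ring
  -- g1 : first derivative expansion
  have hg1 : (fun x => deriv f x - c1 - 2 * c2 * (x - α)) =O[nhds α]
      fun x => (x - α) ^ 2 := by
    apply my_mvt_step (k := 1)
    · exact hdfdiff.mono fun y hy => by
        exact (hy.sub_const _).sub ((differentiableAt_id.sub_const α).const_mul _)
    · simp [hc1]
    · have heq : (fun x => deriv (deriv f) x - 2 * c2) =ᶠ[nhds α]
          deriv (fun x => deriv f x - c1 - 2 * c2 * (x - α)) := by
        filter_upwards [hdfdiff] with y hy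
        have h1 : HasDerivAt (fun x => deriv f x - c1 - 2 * c2 * (x - α))
            (deriv (deriv f) y - 2 * c2) y := by
          have := ((hy.hasDerivAt.sub_const c1).sub
            (((hasDerivAt_id y).sub_const α).const_mul (2 * c2)))
          simp only [mul_one] at this
          exact this
        exact h1.deriv.symm
      exact (hg2.congr' heq (EventuallyEq.refl _ _)).congr_right (by simp [pow_one])
  -- g0 : function expansion
  have hg0 : (fun x => f x - c1 * (x - α) - c2 * (x - α) ^ 2) =O[nhds α]
      fun x => (x - α) ^ 3 := by
    apply my_mvt_step (k := 2)
    · exact hfdiff.mono fun y hy => by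
        exact (hy.sub ((differentiableAt_id.sub_const α).const_mul _)).sub
          (((differentiableAt_id.sub_const α).pow 2).const_mul _)
    · simp [hroot]
    · have heq : (fun x => deriv f x - c1 - 2 * c2 * (x - α)) =ᶠ[nhds α]
          deriv (fun x => f x - c1 * (x - α) - c2 * (x - α) ^ 2) := by
        filter_upwards [hfdiff] with y hy
        have h1 : HasDerivAt (fun x => f x - c1 * (x - α) - c2 * (x - α) ^ 2)
            (deriv f y - c1 - 2 * c2 * (y - α)) y := by
          have := (hy.hasDerivAt.sub (((hasDerivAt_id y).sub_const α).const_mul c1)).sub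
            ((((hasDerivAt_id y).sub_const α).pow 2).const_mul c2)
          exact this.congr_deriv (by norm_num [id] <;> ring)
        exact h1.deriv.symm
      exact hg1.congr' heq (EventuallyEq.refl _ _)
  -- helper pow estimates
  have hu0 : Tendsto (fun x : ℝ => x - α) (nhds α) (nhds 0) := by
    have h : Tendsto (fun x : ℝ => x) (nhds α) (nhds α) := tendsto_id
    simpa using h.sub_const α
  have hupow : ∀ m j : ℕ, (fun x : ℝ => (x - α) ^ (m + j)) =O[nhds α]
      fun x => (x - α) ^ m := by
    intro m j
    have h1 : (fun x : ℝ => (x - α) ^ j) =O[nhds α] (fun _ => (1 : ℝ)) :=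
      ((hu0.pow j).congr (by simp)).isBigO_one ℝ
    have := (isBigO_refl (fun x : ℝ => (x - α) ^ m) (nhds α)).mul h1
    simpa [pow_add] using this
  -- f' - c1 = O(u)
  have hdfc : (fun x => deriv f x - c1) =O[nhds α] fun x => x - α := by
    have h1 : (fun x => deriv f x - c1 - 2 * c2 * (x - α) + 2 * c2 * (x - α))
        =O[nhds α] fun x => x - α := by
      refine IsBigO.add ?_ ?_
      · exact hg1.trans (by simpa [pow_one] using hupow 1 1)
      · exact ((isBigO_refl (fun x : ℝ => x - α) (nhds α)).const_mul_left (2 * c2))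
    simpa using h1
  -- f = O(u)
  have hfO : f =O[nhds α] fun x => x - α := by
    have h1 : (fun x => f x - c1 * (x - α) - c2 * (x - α) ^ 2 + c1 * (x - α)
        + c2 * (x - α) ^ 2) =O[nhds α] fun x => x - α := by
      refine IsBigO.add (IsBigO.add ?_ ?_) ?_
      · exact hg0.trans (by simpa [pow_one] using hupow 1 2)
      · exact (isBigO_refl _ _).const_mul_left c1
      · exact ((by simpa [pow_one] using hupow 1 1 : (fun x : ℝ => (x - α) ^ 2)
          =O[nhds α] fun x => x - α)).const_mul_left c2
    have h2 : (fun x => f x - c1 * (x - α) - c2 * (x - α) ^ 2 + c1 * (x - α)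
        + c2 * (x - α) ^ 2) = f := by funext x; ring
    rwa [h2] at h1
  -- continuity facts
  have hdfcont : ContinuousAt (deriv f) α :=
    (hdfC.differentiableAt (by norm_num)).continuousAt
  have hfne : ∀ᶠ x in nhds α, deriv f x ≠ 0 := hdfcont.eventually_ne hsimple
  have hinv : (fun x => (deriv f x)⁻¹) =O[nhds α] (fun _ => (1 : ℝ)) :=
    (hdfcont.tendsto.inv₀ hsimple).isBigO_one ℝ
  -- t = O(u)
  have htO : t =O[nhds α] fun x => x - α := by
    have h1 := hfO.mul hinv
    simpa [ht, div_eq_mul_inv] using h1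
  -- t tends to 0
  have htt : Tendsto t (nhds α) (nhds 0) := by
    have : ContinuousAt t α := by
      apply ContinuousAt.div (hfC.differentiableAt (by norm_num)).continuousAt hdfcont hsimple
    have h0 : t α = 0 := by simp [ht, hroot]
    simpa [h0] using this.tendsto
  -- weight part : A s - 1 = O(s^2)
  have hweight : (fun s => A s - 1) =O[nhds 0] fun s => s ^ 2 := by
    have hAev : ∀ᶠ s in nhds 0, ContDiffAt ℝ 3 A s := hA.eventually (by simp)
    have hd1 : (fun s => A s - 1) =O[nhds 0] fun s => (s - 0) ^ (1 + 1) := by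
      apply my_mvt_step
      · exact hAev.mono fun y hy => (hy.differentiableAt (by norm_num)).sub_const 1
      · simp [hA0]
      · have hdA : ContDiffAt ℝ 2 (deriv A) 0 := my_contDiffAt_deriv hA (by norm_num)
        have h2 : deriv A =O[nhds 0] fun s => s - 0 := by
          apply my_deriv_isBigO (hdA.differentiableAt (by norm_num)) hA1
        have heq : deriv A =ᶠ[nhds 0] deriv (fun s => A s - 1) := by
          filter_upwards [hAev] with y hy
          have h1 : HasDerivAt (fun s => A s - 1) (deriv A y) y :=
            (hy.differentiableAt (by norm_num)).hasDerivAt.sub_const 1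
          exact h1.deriv.symm
        exact (h2.congr' heq (EventuallyEq.refl _ _)).congr_right (by simp)
    simpa using hd1
  -- composed weight part
  have hAt : (fun x => A (t x) - 1) =O[nhds α] fun x => (x - α) ^ 2 :=
    (hweight.comp_tendsto htt).trans (htO.pow 2)
  -- S2 = (1 - A(t)) * t = O(u^3)
  have hS2 : (fun x => (1 - A (t x)) * t x) =O[nhds α] fun x => (x - α) ^ 3 := by
    have h1 := (hAt.neg_left).mul htO
    have h2 : (fun x => -(A (t x) - 1) * t x) = fun x => (1 - A (t x)) * t x := by
      funext x; ring
    have h3 : (fun x : ℝ => (x - α) ^ 2 * (x - α)) = fun x => (x - α) ^ 3 := by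
      funext x; ring
    rw [h2, h3] at h1
    exact h1
  -- N = O(u^3)
  set c : ℝ := c2 / c1 with hc
  have hN : (fun x => (x - α) * deriv f x - f x - c * (x - α) ^ 2 * deriv f x)
      =O[nhds α] fun x => (x - α) ^ 3 := by
    have hid : (fun x => (x - α) * deriv f x - f x - c * (x - α) ^ 2 * deriv f x)
        = fun x => (x - α) * (deriv f x - c1 - 2 * c2 * (x - α))
          - (f x - c1 * (x - α) - c2 * (x - α) ^ 2)
          - c * ((x - α) ^ 2 * (deriv f x - c1)) := by
      funext x
      have : c * c1 = c2 := by
        rw [hc]; field_simp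
      nlinarith [this]
    rw [hid]
    refine IsBigO.sub (IsBigO.sub ?_ hg0) ?_
    · have h1 := (isBigO_refl (fun x : ℝ => x - α) (nhds α)).mul hg1
      have h2 : (fun x : ℝ => (x - α) * (x - α) ^ 2) = fun x => (x - α) ^ 3 := by
        funext x; ring
      rwa [h2] at h1
    · have h1 := (isBigO_refl (fun x : ℝ => (x - α) ^ 2) (nhds α)).mul hdfc
      exact (h1.congr_right (fun x => by ring)).const_mul_left c
  -- S1 = x - α - t - c u² = N / f'  (eventually)
  have hS1 : (fun x => x - α - t x - c * (x - α) ^ 2) =O[nhds α]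
      fun x => (x - α) ^ 3 := by
    have hdivO : (fun x => ((x - α) * deriv f x - f x - c * (x - α) ^ 2 * deriv f x)
        * (deriv f x)⁻¹) =O[nhds α] fun x => (x - α) ^ 3 := by
      have := hN.mul hinv
      simpa using this
    refine hdivO.congr' ?_ (EventuallyEq.refl _ _)
    filter_upwards [hfne] with x hx
    rw [ht]
    field_simp
  -- assemble
  have hmain : (fun x => (x - A (t x) * t x) - α - c * (x - α) ^ 2)
      =O[nhds α] fun x => (x - α) ^ 3 := by
    have hid : (fun x => (x - A (t x) * t x) - α - c * (x - α) ^ 2)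
        = fun x => (x - α - t x - c * (x - α) ^ 2) + (1 - A (t x)) * t x := by
      funext x; ring
    rw [hid]
    exact hS1.add hS2
  exact (hmain.mono nhdsWithin_le_nhds)
end

section
/- Let f be analytic near a simple root α with c_h = f^{(h)}(α)/h!. Let y = x - f(x)/f'(x), t = f(y)/f(x), and let B be twice differentiable at 0 with B(0) = 1 and B'(0) = 1. Define z = y - B(t) · f(y)/f[x,y]. Then z - α = O((x-α)⁴) as x → α; that is, the two-step method with such a weight function B has local convergence of order at least four. -/
open Asymptotics Filter Topology

private lemma analyticAt_deriv' {g : ℝ → ℝ} {a : ℝ} (h : AnalyticAt ℝ g a) :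
    AnalyticAt ℝ (deriv g) a := by
  have hd : deriv g = (fun L : ℝ →L[ℝ] ℝ => L 1) ∘ fderiv ℝ g := by
    ext x
    simp [Function.comp, fderiv_apply_one_eq_deriv]
  rw [hd]
  exact ((ContinuousLinearMap.apply ℝ ℝ (1 : ℝ)).analyticAt _).comp h.fderiv

private lemma taylor2 {B : ℝ → ℝ} (hB : ContDiffAt ℝ 2 B 0) :
    (fun s => B s - B 0 - s * deriv B 0) =O[𝓝 (0:ℝ)] (fun s => s ^ 2) := by
  have h1 : ContDiffAt ℝ 1 (fderiv ℝ B) 0 := hB.fderiv_right (by norm_num)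
  have h2 : ContDiffAt ℝ 1 (fun x => fderiv ℝ B x 1) 0 := h1.clm_apply contDiffAt_const
  have h3 : ContDiffAt ℝ 1 (deriv B) 0 := by
    have : deriv B = fun x => fderiv ℝ B x 1 := by ext x; rw [fderiv_apply_one_eq_deriv]
    rw [this]; exact h2
  have hdiff0 : DifferentiableAt ℝ (deriv B) 0 := h3.differentiableAt one_ne_zero
  have hO : (fun s => deriv B s - deriv B 0) =O[𝓝 (0:ℝ)] (fun s => s) := by
    simpa using hdiff0.isBigO_sub
  obtain ⟨C, hC0, hC⟩ := hO.exists_nonneg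
  have hCb := hC.bound
  have hEv : ∀ᶠ s in 𝓝 (0:ℝ), DifferentiableAt ℝ B s := by
    filter_upwards [hB.eventually (by norm_num)] with s hs
    exact hs.differentiableAt two_ne_zero
  obtain ⟨δ, hδ, hball⟩ := Metric.eventually_nhds_iff.mp (hCb.and hEv)
  rw [isBigO_iff]
  refine ⟨C, Metric.eventually_nhds_iff.mpr ⟨δ, hδ, fun {s} hs => ?_⟩⟩
  have hsn : ‖s‖ < δ := by simpa using hs
  set c := deriv B 0 with hc
  have hseg : segment ℝ 0 s ⊆ Metric.closedBall 0 ‖s‖ :=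
    (convex_closedBall (0:ℝ) ‖s‖).segment_subset (by simp) (by simp)
  have key : ‖(B s - s * c) - (B 0 - 0 * c)‖ ≤ C * ‖s‖ * ‖s - 0‖ := by
    apply Convex.norm_image_sub_le_of_norm_hasDerivWithin_le
      (f' := fun u => deriv B u - c) ?_ ?_ (convex_segment 0 s)
      (left_mem_segment ℝ 0 s) (right_mem_segment ℝ 0 s)
    · intro u hu
      have hun : ‖u‖ ≤ ‖s‖ := by simpa using hseg hu
      have hu' : dist u (0:ℝ) < δ := by simp only [dist_zero_right]; exact lt_of_le_of_lt hun hsn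
      have hd := (hball hu').2
      have := (hd.hasDerivAt.sub ((hasDerivAt_id u).mul_const c)).hasDerivWithinAt
        (s := segment ℝ 0 s)
      simp only [id, one_mul] at this
      exact this
    · intro u hu
      have hun : ‖u‖ ≤ ‖s‖ := by simpa using hseg hu
      have hu' : dist u (0:ℝ) < δ := by simp only [dist_zero_right]; exact lt_of_le_of_lt hun hsn
      have hb := (hball hu').1
      calc ‖deriv B u - c‖ ≤ C * ‖u‖ := by simpa using hb
        _ ≤ C * ‖s‖ := by gcongr
  have h5 : ‖B s - B 0 - s * c‖ ≤ C * ‖s‖ * ‖s‖ := by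
    have : B s - B 0 - s * c = (B s - s * c) - (B 0 - 0 * c) := by ring
    rw [this]
    simpa [sub_zero] using key
  calc ‖B s - B 0 - s * c‖ ≤ C * ‖s‖ * ‖s‖ := h5
    _ = C * ‖s ^ 2‖ := by rw [mul_assoc, ← norm_mul, sq]

private lemma key_split : ∀ eps dd Fv Fyv b : ℝ, dd ≠ 0 → Fv ≠ 0 → Fv - Fyv ≠ 0 →
    (eps - Fv / dd) - b * (Fyv * (Fv / dd) / (Fv - Fyv)) =
    (dd * ((eps - Fv / dd) * Fv - eps * Fyv) - Fyv ^ 2) / (dd * (Fv - Fyv))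
      + (1 + Fyv / Fv - b) * (Fyv * (Fv / dd) / (Fv - Fyv)) := by
  intro eps dd Fv Fyv b h1 h2 h3
  field_simp
  ring

/-- The two-step method `z = y - B(t)·f(y)/f[x,y]`, `y = x - f x / f' x`,
`t = f(y)/f(x)`, with `B(0) = 1`, `B'(0) = 1`, has local order at least four. -/
theorem two_step_fourth_order (f B : ℝ → ℝ) (α : ℝ)
    (hf : AnalyticAt ℝ f α) (hroot : f α = 0) (hsimple : deriv f α ≠ 0)
    (hB : ContDiffAt ℝ 2 B 0) (hB0 : B 0 = 1) (hB1 : deriv B 0 = 1) :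
    (fun x =>
        (fun y => y - B (f y / f x) * (f y / ((f x - f y) / (x - y))))
          (x - f x / deriv f x) - α)
      =O[nhdsWithin α {α}ᶜ] fun x => (x - α) ^ 4 := by
  set L := nhdsWithin α {α}ᶜ with hL
  have hl : L ≤ 𝓝 α := nhdsWithin_le_nhds
  obtain ⟨p, hp⟩ := hf
  have hf : AnalyticAt ℝ f α := ⟨p, hp⟩
  set c1 := deriv f α with hc1
  set f1 : ℝ → ℝ := dslope f α with hf1def
  have hf1 : AnalyticAt ℝ f1 α := ⟨_, hp.has_fpower_series_dslope_fslope⟩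
  have hf1α : f1 α = c1 := dslope_same f α
  have hff1 : ∀ x, f x = (x - α) * f1 x := by
    intro x
    have h := sub_smul_dslope f α x
    rw [hroot, sub_zero] at h
    rw [← h, smul_eq_mul]
  obtain ⟨q, hq⟩ := hf1
  have hf1 : AnalyticAt ℝ f1 α := ⟨q, hq⟩
  set f2 : ℝ → ℝ := dslope f1 α with hf2def
  have hf2 : AnalyticAt ℝ f2 α := ⟨_, hq.has_fpower_series_dslope_fslope⟩
  set c2 := f2 α with hc2
  have hf1f2 : ∀ x, f1 x = c1 + (x - α) * f2 x := by
    intro x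
    have h := sub_smul_dslope f1 α x
    rw [smul_eq_mul] at h
    rw [← hf1α]; linarith [h]
  have hf' : AnalyticAt ℝ (deriv f) α := analyticAt_deriv' ⟨p, hp⟩
  have hf1' : AnalyticAt ℝ (deriv f1) α := analyticAt_deriv' hf1
  have hderiv_f1_α : deriv f1 α = c2 := by
    have h0 : HasDerivAt (fun x => c1 + (x - α) * f2 x)
        (1 * f2 α + (α - α) * deriv f2 α) α :=
      (((hasDerivAt_id α).sub_const α).mul hf2.differentiableAt.hasDerivAt).const_add c1
    have h1 : HasDerivAt f1 (1 * f2 α + (α - α) * deriv f2 α) α :=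
      h0.congr_of_eventuallyEq (Eventually.of_forall hf1f2)
    simpa using h1.deriv
  have hderiv_id : ∀ᶠ x in 𝓝 α, deriv f x = f1 x + (x - α) * deriv f1 x := by
    filter_upwards [hf1.eventually_analyticAt] with z hz
    have h0 : HasDerivAt (fun x => (x - α) * f1 x)
        (1 * f1 z + (z - α) * deriv f1 z) z :=
      ((hasDerivAt_id z).sub_const α).mul hz.differentiableAt.hasDerivAt
    have h1 : HasDerivAt f (1 * f1 z + (z - α) * deriv f1 z) z :=
      h0.congr_of_eventuallyEq (Eventually.of_forall hff1)
    simpa using h1.deriv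
  have hne' : ∀ᶠ x in 𝓝 α, deriv f x ≠ 0 := hf'.continuousAt.eventually_ne hsimple
  -- basic functions
  set y : ℝ → ℝ := fun x => x - f x / deriv f x with hy
  set a : ℝ → ℝ := fun x => y x - α with ha
  set Fy : ℝ → ℝ := fun x => f (y x) with hFydef
  set t : ℝ → ℝ := fun x => Fy x / f x with ht
  set w : ℝ → ℝ := fun x => x - y x with hw
  set S : ℝ → ℝ := fun x => f x - Fy x with hS
  set Q : ℝ → ℝ := fun x => Fy x * w x / S x with hQ
  set G : ℝ → ℝ := fun x => f2 (y x) with hG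
  -- tendsto facts
  have htf1 : Tendsto f1 (𝓝 α) (𝓝 c1) := by
    have := hf1.continuousAt.tendsto; rwa [hf1α] at this
  have htf2 : Tendsto f2 (𝓝 α) (𝓝 c2) := hf2.continuousAt.tendsto
  have htf' : Tendsto (deriv f) (𝓝 α) (𝓝 c1) := hf'.continuousAt.tendsto
  have htf1' : Tendsto (deriv f1) (𝓝 α) (𝓝 c2) := by
    have := hf1'.continuousAt.tendsto; rwa [hderiv_f1_α] at this
  have htf : Tendsto f (𝓝 α) (𝓝 0) := by
    have := (AnalyticAt.continuousAt ⟨p, hp⟩).tendsto; rwa [hroot] at this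
  have hty : Tendsto y (𝓝 α) (𝓝 α) := by
    have h0 : Tendsto (fun x => f x / deriv f x) (𝓝 α) (𝓝 (0 / c1)) :=
      htf.div htf' hsimple
    rw [zero_div] at h0
    have := tendsto_id.sub h0
    simpa using this
  have hta : Tendsto a (𝓝 α) (𝓝 0) := by
    have := hty.sub_const α
    simpa using this
  have htG : Tendsto G (𝓝 α) (𝓝 c2) := htf2.comp hty
  -- eventual nonvanishing / identities
  have hεne : ∀ᶠ x in L, x - α ≠ 0 := by
    rw [hL]
    filter_upwards [self_mem_nhdsWithin] with x hx
    exact sub_ne_zero.mpr hx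
  have hkey_a : ∀ᶠ x in 𝓝 α, a x * deriv f x = (x - α) ^ 2 * deriv f1 x := by
    filter_upwards [hne', hderiv_id] with x h0 h1
    have hax : a x = x - f x / deriv f x - α := rfl
    rw [hax, sub_mul, sub_mul, div_mul_cancel₀ _ h0, hff1 x, h1]
    ring
  have ha_eq : a =ᶠ[𝓝 α] fun x => (x - α) ^ 2 * (deriv f1 x / deriv f x) := by
    filter_upwards [hne', hkey_a] with x h0 h1
    rw [← mul_div_assoc, eq_div_iff h0]
    exact h1
  have hOa : a =O[𝓝 α] fun x => (x - α) ^ 2 := by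
    have h1 : Tendsto (fun x => deriv f1 x / deriv f x) (𝓝 α) (𝓝 (c2 / c1)) :=
      htf1'.div htf' hsimple
    have h2 := (isBigO_refl (fun x => (x - α) ^ 2) (𝓝 α)).mul (h1.isBigO_one ℝ)
    refine IsBigO.congr' h2 ha_eq.symm ?_
    exact Eventually.of_forall fun x => mul_one _
  have hFy_eq : ∀ x, Fy x = a x * (c1 + a x * G x) := by
    intro x
    rw [hFydef]
    simp only
    rw [hff1 (y x), hf1f2 (y x)]
  have hOFy : Fy =O[𝓝 α] fun x => (x - α) ^ 2 := by
    have h1 : Tendsto (fun x => c1 + a x * G x) (𝓝 α) (𝓝 (c1 + 0 * c2)) :=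
      tendsto_const_nhds.add (hta.mul htG)
    have h2 := hOa.mul (h1.isBigO_one ℝ)
    refine IsBigO.congr' h2 ?_ ?_
    · exact Eventually.of_forall fun x => (hFy_eq x).symm
    · exact Eventually.of_forall fun x => mul_one _
  have htε0 : Tendsto (fun x => x - α) L (𝓝 0) := by
    have h0 : Tendsto (fun x : ℝ => x - α) (𝓝 α) (𝓝 (α - α)) :=
      (continuous_id.sub continuous_const).tendsto α
    rw [sub_self] at h0
    exact h0.mono_left hl
  have hw_eq : ∀ x, w x = f x / deriv f x := fun x => sub_sub_cancel _ _
  have hOw : w =O[𝓝 α] fun x => x - α := by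
    have h1 : Tendsto (fun x => f1 x / deriv f x) (𝓝 α) (𝓝 (c1 / c1)) :=
      htf1.div htf' hsimple
    have h2 := (isBigO_refl (fun x => x - α) (𝓝 α)).mul (h1.isBigO_one ℝ)
    refine IsBigO.congr' h2 ?_ ?_
    · refine Eventually.of_forall fun x => ?_
      show (x - α) * (f1 x / deriv f x) = w x
      rw [← mul_div_assoc, ← hff1 x, ← hw_eq x]
    · exact Eventually.of_forall fun x => mul_one _
  have hOaε : (fun x => a x / (x - α)) =O[L] fun x => x - α := by
    have h2 := (hOa.mono hl).mul (isBigO_refl (fun x => (x - α)⁻¹) L)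
    refine IsBigO.congr' h2 ?_ ?_
    · exact Eventually.of_forall fun x => (div_eq_mul_inv _ _).symm
    · filter_upwards [hεne] with x hx
      field_simp
  have hOFyε : (fun x => Fy x / (x - α)) =O[L] fun x => x - α := by
    have h2 := ((hOFy.mono hl)).mul (isBigO_refl (fun x => (x - α)⁻¹) L)
    refine IsBigO.congr' h2 ?_ ?_
    · exact Eventually.of_forall fun x => (div_eq_mul_inv _ _).symm
    · filter_upwards [hεne] with x hx
      field_simp
  have hSdiv : Tendsto (fun x => S x / (x - α)) L (𝓝 c1) := by
    have hFyε0 : Tendsto (fun x => Fy x / (x - α)) L (𝓝 0) :=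
      hOFyε.trans_tendsto htε0
    have h1 := (htf1.mono_left hl).sub hFyε0
    rw [sub_zero] at h1
    refine h1.congr' ?_
    filter_upwards [hεne] with x hx
    show f1 x - Fy x / (x - α) = S x / (x - α)
    rw [hS]
    simp only
    rw [hff1 x]
    field_simp
    try ring
  have hSne : ∀ᶠ x in L, S x ≠ 0 := by
    filter_upwards [hSdiv.eventually_ne hsimple] with x hx
    intro h
    exact hx (by rw [h, zero_div])
  have htεS : Tendsto (fun x => (x - α) / S x) L (𝓝 c1⁻¹) := by
    have h1 := hSdiv.inv₀ hsimple
    exact h1.congr fun x => inv_div _ _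
  have hf1ne : ∀ᶠ x in 𝓝 α, f1 x ≠ 0 := htf1.eventually_ne hsimple
  have hFne : ∀ᶠ x in L, f x ≠ 0 := by
    filter_upwards [hεne, hf1ne.filter_mono hl] with x h1 h2
    rw [hff1 x]
    exact mul_ne_zero h1 h2
  have hOt : t =O[L] fun x => x - α := by
    have h1 : Tendsto (fun x => (c1 + a x * G x) / f1 x) (𝓝 α) (𝓝 ((c1 + 0 * c2) / c1)) :=
      (tendsto_const_nhds.add (hta.mul htG)).div htf1 hsimple
    have h2 := hOaε.mul ((h1.mono_left hl).isBigO_one ℝ)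
    refine IsBigO.congr' h2 ?_ ?_
    · filter_upwards [hεne, hf1ne.filter_mono hl] with x h3 h4
      rw [ht]
      simp only
      rw [hFy_eq x, hff1 x]
      field_simp
      try ring
    · exact Eventually.of_forall fun x => mul_one _
  have htt0 : Tendsto t L (𝓝 0) := hOt.trans_tendsto htε0
  have hOQ : Q =O[L] fun x => (x - α) ^ 2 := by
    have h2 := (((hOFy.mono hl).mul (hOw.mono hl)).mul
      (isBigO_refl (fun x => (x - α)⁻¹) L)).mul (htεS.isBigO_one ℝ)
    refine IsBigO.congr' h2 ?_ ?_
    · filter_upwards [hεne] with x hx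
      rw [hQ]
      simp only
      field_simp
      try ring
    · filter_upwards [hεne] with x hx
      field_simp
      try ring
  -- the numerator N and its decomposition
  set N : ℝ → ℝ := fun x => deriv f x * (a x * f x - (x - α) * Fy x) - Fy x ^ 2 with hN
  set D : ℝ → ℝ := fun x => f2 x * deriv f x ^ 2 - c1 ^ 2 * deriv f1 x with hD
  have hNdecomp : N =ᶠ[𝓝 α] fun x =>
      (x - α) ^ 4 * (deriv f1 x * (D x / deriv f x ^ 2))
      + (-((x - α) ^ 3 * (deriv f1 x * (a x * G x))))
      + (-((2 * c1 * G x) * a x ^ 3))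
      + (-(G x ^ 2 * a x ^ 4)) := by
    filter_upwards [hne', ha_eq] with x h0 h1
    rw [hN]
    simp only
    rw [hFy_eq x, hff1 x, hf1f2 x, hD]
    simp only
    rw [h1]
    field_simp
    ring
  have hdiffD : DifferentiableAt ℝ D α := by
    rw [hD]
    exact (hf2.differentiableAt.mul (hf'.differentiableAt.pow 2)).sub
      (hf1'.differentiableAt.const_mul _)
  have hDα : D α = 0 := by
    rw [hD]
    simp only
    rw [hderiv_f1_α, ← hc1, ← hc2]
    ring
  have hOD : D =O[𝓝 α] fun x => x - α := by
    have h := hdiffD.isBigO_sub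
    rw [hDα] at h
    simpa using h
  -- bounds for the four pieces
  have hOn1 : (fun x => (x - α) ^ 4 * (deriv f1 x * (D x / deriv f x ^ 2)))
      =O[L] fun x => (x - α) ^ 5 := by
    have ht1 : Tendsto (fun x => deriv f1 x / deriv f x ^ 2) (𝓝 α) (𝓝 (c2 / c1 ^ 2)) :=
      htf1'.div (htf'.pow 2) (pow_ne_zero 2 hsimple)
    have hinner : (fun x => deriv f1 x * (D x / deriv f x ^ 2)) =O[L] fun x => x - α := by
      have h2 := (hOD.mono hl).mul ((ht1.mono_left hl).isBigO_one ℝ)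
      refine IsBigO.congr' h2 ?_ ?_
      · exact Eventually.of_forall fun x => by ring
      · exact Eventually.of_forall fun x => mul_one _
    have h3 := (isBigO_refl (fun x => (x - α) ^ 4) L).mul hinner
    refine h3.congr_right fun x => (pow_succ _ 4).symm
  have hOn2 : (fun x => -((x - α) ^ 3 * (deriv f1 x * (a x * G x))))
      =O[L] fun x => (x - α) ^ 5 := by
    have hinner := (hOa.mono hl).mul (((htf1'.mul htG).mono_left hl).isBigO_one ℝ)
    have h3 := (isBigO_refl (fun x => (x - α) ^ 3) L).mul hinner
    refine IsBigO.neg_left (h3.congr' ?_ ?_)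
    · exact Eventually.of_forall fun x => by ring
    · exact Eventually.of_forall fun x => by ring
  have hε65 : (fun x => ((x - α) ^ 2) ^ 3) =O[L] fun x => (x - α) ^ 5 := by
    have h := (isBigO_refl (fun x => (x - α) ^ 5) L).mul (htε0.isBigO_one ℝ)
    refine h.congr' ?_ ?_
    · exact Eventually.of_forall fun x => by ring
    · exact Eventually.of_forall fun x => mul_one _
  have hε85 : (fun x => ((x - α) ^ 2) ^ 4) =O[L] fun x => (x - α) ^ 5 := by
    have ht3 : Tendsto (fun x => (x - α) ^ 3) L (𝓝 0) := by
      have := htε0.pow 3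
      simpa using this
    have h := (isBigO_refl (fun x => (x - α) ^ 5) L).mul (ht3.isBigO_one ℝ)
    refine h.congr' ?_ ?_
    · exact Eventually.of_forall fun x => by ring
    · exact Eventually.of_forall fun x => mul_one _
  have hOn3 : (fun x => -((2 * c1 * G x) * a x ^ 3)) =O[L] fun x => (x - α) ^ 5 := by
    have ha3 : (fun x => a x ^ 3) =O[L] fun x => (x - α) ^ 5 :=
      ((hOa.mono hl).pow 3).trans hε65
    have htc : Tendsto (fun x => 2 * c1 * G x) (𝓝 α) (𝓝 (2 * c1 * c2)) := htG.const_mul (2 * c1)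
    have h := ((htc.mono_left hl).isBigO_one ℝ).mul ha3
    refine IsBigO.neg_left (h.congr' ?_ ?_)
    · exact EventuallyEq.rfl
    · exact Eventually.of_forall fun x => one_mul _
  have hOn4 : (fun x => -(G x ^ 2 * a x ^ 4)) =O[L] fun x => (x - α) ^ 5 := by
    have ha4 : (fun x => a x ^ 4) =O[L] fun x => (x - α) ^ 5 :=
      ((hOa.mono hl).pow 4).trans hε85
    have h := (((htG.mul htG).mono_left hl).isBigO_one ℝ).mul ha4
    refine IsBigO.neg_left (h.congr' ?_ ?_)
    · exact Eventually.of_forall fun x => by ring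
    · exact Eventually.of_forall fun x => one_mul _
  have hON : N =O[L] fun x => (x - α) ^ 5 := by
    have h := ((hOn1.add hOn2).add hOn3).add hOn4
    exact IsBigO.congr' h (hNdecomp.filter_mono hl).symm EventuallyEq.rfl
  -- T1 bound
  have hT1 : (fun x => N x / (deriv f x * S x)) =O[L] fun x => (x - α) ^ 4 := by
    have hinv : Tendsto (fun x => (deriv f x)⁻¹) (𝓝 α) (𝓝 c1⁻¹) := htf'.inv₀ hsimple
    have h := ((hON.mul (isBigO_refl (fun x => (x - α)⁻¹) L)).mul
      (htεS.isBigO_one ℝ)).mul ((hinv.mono_left hl).isBigO_one ℝ)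
    refine IsBigO.congr' h ?_ ?_
    · filter_upwards [hεne] with x hx
      show N x * (x - α)⁻¹ * ((x - α) / S x) * (deriv f x)⁻¹ = N x / (deriv f x * S x)
      field_simp
    · filter_upwards [hεne] with x hx
      show (x - α) ^ 5 * (x - α)⁻¹ * 1 * 1 = (x - α) ^ 4
      field_simp
  -- T2 bound
  have hrB : (fun s : ℝ => 1 + s - B s) =O[𝓝 (0:ℝ)] fun s => s ^ 2 := by
    have h := taylor2 hB
    rw [hB0, hB1] at h
    refine IsBigO.congr_left h.neg_left fun s => ?_
    ring
  have hcomp : (fun x => 1 + t x - B (t x)) =O[L] fun x => t x ^ 2 :=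
    hrB.comp_tendsto htt0
  have hT2 : (fun x => (1 + t x - B (t x)) * Q x) =O[L] fun x => (x - α) ^ 4 := by
    have h := (hcomp.trans (hOt.pow 2)).mul hOQ
    refine h.congr_right fun x => ?_
    ring
  -- the key algebraic identity
  have hfinal : (fun x =>
        (fun y => y - B (f y / f x) * (f y / ((f x - f y) / (x - y))))
          (x - f x / deriv f x) - α) =ᶠ[L]
      fun x => N x / (deriv f x * S x) + (1 + t x - B (t x)) * Q x := by
    filter_upwards [hεne, hne'.filter_mono hl, hFne, hSne] with x hx h0 hF hs
    have hk := key_split (x - α) (deriv f x) (f x) (Fy x) (B (t x)) h0 hF hs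
    show (x - f x / deriv f x) - B (t x) * (Fy x / (S x / w x)) - α =
      N x / (deriv f x * S x) + (1 + t x - B (t x)) * Q x
    rw [hN, hQ, hS, ht, hw_eq x]
    simp only
    rw [div_div_eq_mul_div]
    have hax : a x = (x - α) - f x / deriv f x := by rw [ha, hy]; ring
    rw [hax]
    rw [hS] at hs
    simp only at hs
    linear_combination hk
  exact IsBigO.congr' (hT1.add hT2) hfinal.symm EventuallyEq.rfl
end
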